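/- Let ψ : ℝᵐ → ℝ be convex and L_ψ-smooth, set L̃ = 2L_ψ, let δ ≥ 0 and let N ≥ 1 be an integer. Let α_0 = A_0 = 0 and, for k ≥ 0, let α_{k+1} > 0 satisfy 2L̃α_{k+1}² = A_k + α_{k+1} with A_{k+1} = A_k + α_{k+1}. Let ỹ⁰ = z⁰ = y⁰ ∈ ℝᵐ and, for k ≥ 0, let G^{k+1}, m^{k+1} ∈ ℝᵐ be vectors with ‖m^{k+1} − ∇ψ(ỹ^{k+1})‖₂ ≤ δ, and define ỹ^{k+1} = (A_k y^k + α_{k+1} z^k)/A_{k+1}, z^{k+1} = z^k − α_{k+1}·G^{k+1}, and y^{k+1} = (A_k y^k + α_{k+1} z^{k+1})/A_{k+1}. Then for every z ∈ ℝᵐ: A_N·ψ(y^N) ≤ ½‖z − z⁰‖₂² − ½‖z − z^N‖₂² + Σ_{k=0}^{N−1} α_{k+1}·(ψ(ỹ^{k+1}) + ⟨G^{k+1}, z − ỹ^{k+1}⟩) + Σ_{k=0}^{N−1} A_k·⟨G^{k+1} − m^{k+1}, y^k − ỹ^{k+1}⟩ + Σ_{k=0}^{N−1} (A_{k+1}/(2L̃))·‖m^{k+1}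 − G^{k+1}‖₂² + δ·Σ_{k=0}^{N−1} A_k·‖y^k − ỹ^{k+1}‖₂ + δ²·Σ_{k=0}^{N−1} A_{k+1}/L̃. -/

import Mathlib

open Finset
open scoped RealInnerProductSpace

section Helpers
variable {d : ℕ}

lemma grad_lipschitz_continuous (ψ : EuclideanSpace ℝ (Fin d) → ℝ) (Lψ : ℝ) (hLψ : 0 < Lψ)
    (hsm : ∀ x y, ‖gradient ψ x - gradient ψ y‖ ≤ Lψ * ‖x - y‖) :
    Continuous (gradient ψ) := by
  have : LipschitzWith (Real.toNNReal Lψ) (gradient ψ) := by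
    apply LipschitzWith.of_dist_le_mul
    intro a b
    rw [dist_eq_norm, dist_eq_norm]
    simpa [Real.coe_toNNReal _ hLψ.le] using hsm a b
  exact this.continuous

lemma line_hasDerivAt (ψ : EuclideanSpace ℝ (Fin d) → ℝ) (hdiff : Differentiable ℝ ψ)
    (x v : EuclideanSpace ℝ (Fin d)) (t : ℝ) :
    HasDerivAt (fun s : ℝ => ψ (x + s • v)) ⟪gradient ψ (x + t • v), v⟫ t := by
  have hline : HasDerivAt (fun s : ℝ => x + s • v) v t := by
    simpa using ((hasDerivAt_id t).smul_const v).const_add x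
  have hgrad : HasFDerivAt ψ ((InnerProductSpace.toDual ℝ _) (gradient ψ (x + t • v))) (x + t • v) := by
    have := (hdiff (x + t • v)).hasGradientAt
    rwa [hasGradientAt_iff_hasFDerivAt] at this
  exact hgrad.comp_hasDerivAt t hline

lemma descent_lemma (ψ : EuclideanSpace ℝ (Fin d) → ℝ) (Lψ : ℝ) (hLψ : 0 < Lψ)
    (hdiff : Differentiable ℝ ψ)
    (hsm : ∀ x y, ‖gradient ψ x - gradient ψ y‖ ≤ Lψ * ‖x - y‖)
    (x v : EuclideanSpace ℝ (Fin d)) :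
    ψ (x + v) ≤ ψ x + ⟪gradient ψ x, v⟫ + Lψ / 2 * ‖v‖ ^ 2 := by
  have hcont : Continuous (gradient ψ) := grad_lipschitz_continuous ψ Lψ hLψ hsm
  set g' : ℝ → ℝ := fun t => ⟪gradient ψ (x + t • v), v⟫ with hg'
  have hg'cont : Continuous g' := by
    apply Continuous.inner
    · exact hcont.comp (by continuity)
    · exact continuous_const
  have hftc : ∫ t in (0:ℝ)..1, g' t = ψ (x + v) - ψ x := by
    have := intervalIntegral.integral_eq_sub_of_hasDerivAt
      (f := fun s : ℝ => ψ (x + s • v)) (f' := g')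
      (fun t _ => line_hasDerivAt ψ hdiff x v t)
      (hg'cont.intervalIntegrable 0 1)
    simpa using this
  have hbound : ∀ t ∈ Set.Icc (0:ℝ) 1, g' t ≤ ⟪gradient ψ x, v⟫ + (Lψ * ‖v‖ ^ 2) * t := by
    intro t ht
    have h1 : ⟪gradient ψ (x + t • v) - gradient ψ x, v⟫ ≤ Lψ * ‖v‖ ^ 2 * t := by
      calc ⟪gradient ψ (x + t • v) - gradient ψ x, v⟫
          ≤ ‖gradient ψ (x + t • v) - gradient ψ x‖ * ‖v‖ := real_inner_le_norm _ _
        _ ≤ (Lψ * ‖x + t • v - x‖) * ‖v‖ := by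
            exact mul_le_mul_of_nonneg_right (hsm _ _) (norm_nonneg _)
        _ = Lψ * ‖v‖ ^ 2 * t := by
            rw [add_sub_cancel_left, norm_smul, Real.norm_eq_abs, abs_of_nonneg ht.1]
            ring
    have h2 : g' t = ⟪gradient ψ x, v⟫ + ⟪gradient ψ (x + t • v) - gradient ψ x, v⟫ := by
      rw [inner_sub_left]; ring
    linarith
  have hintle : ∫ t in (0:ℝ)..1, g' t ≤ ∫ t in (0:ℝ)..1, (⟪gradient ψ x, v⟫ + (Lψ * ‖v‖ ^ 2) * t) := by
    apply intervalIntegral.integral_mono_on (by norm_num)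
      (hg'cont.intervalIntegrable 0 1)
      ((by continuity : Continuous fun t : ℝ => ⟪gradient ψ x, v⟫ + (Lψ * ‖v‖ ^ 2) * t).intervalIntegrable 0 1)
    exact hbound
  have hval : ∫ t in (0:ℝ)..1, (⟪gradient ψ x, v⟫ + (Lψ * ‖v‖ ^ 2) * t)
      = ⟪gradient ψ x, v⟫ + Lψ / 2 * ‖v‖ ^ 2 := by
    rw [intervalIntegral.integral_add intervalIntegrable_const
      ((by continuity : Continuous fun t : ℝ => (Lψ * ‖v‖ ^ 2) * t).intervalIntegrable 0 1),
      intervalIntegral.integral_const_mul, integral_id]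
    norm_num
    ring
  linarith [hftc ▸ hintle.trans_eq hval]

lemma convex_grad_ineq (ψ : EuclideanSpace ℝ (Fin d) → ℝ)
    (hconv : ConvexOn ℝ Set.univ ψ) (hdiff : Differentiable ℝ ψ)
    (x y : EuclideanSpace ℝ (Fin d)) :
    ψ x + ⟪gradient ψ x, y - x⟫ ≤ ψ y := by
  have hg : ConvexOn ℝ Set.univ (fun t : ℝ => ψ (x + t • (y - x))) := by
    have := hconv.comp_affineMap (AffineMap.lineMap x y)
    have heq : (fun t : ℝ => ψ (x + t • (y - x))) = ψ ∘ (AffineMap.lineMap x y) := by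
      funext t
      simp [AffineMap.lineMap_apply, add_comm]
    rw [heq]
    simpa using this
  have hder : HasDerivAt (fun t : ℝ => ψ (x + t • (y - x))) ⟪gradient ψ x, y - x⟫ 0 := by
    simpa using line_hasDerivAt ψ hdiff x (y - x) 0
  have := hg.le_slope_of_hasDerivAt (Set.mem_univ (0:ℝ)) (Set.mem_univ (1:ℝ)) one_pos hder
  rw [slope_def_field] at this
  have h1 : x + (1:ℝ) • (y - x) = y := by rw [one_smul]; abel
  have h0 : x + (0:ℝ) • (y - x) = x := by rw [zero_smul]; abel
  rw [h1, h0] at this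
  simp only [div_one, sub_zero] at this
  linarith

lemma aux_young1 {a u v i : ℝ} (ha : 0 ≤ a) (h : i ≤ u * v) :
    a * i ≤ a ^ 2 * u ^ 2 + 1/4 * v ^ 2 := by
  nlinarith [sq_nonneg (a * u - v / 2), mul_le_mul_of_nonneg_left h ha]

lemma aux_young2 {a dd v i : ℝ} (ha : 0 ≤ a) (h : i ≤ dd * v) :
    a * i ≤ dd ^ 2 * (2 * a ^ 2) + 1/8 * v ^ 2 := by
  nlinarith [sq_nonneg (2 * a * dd - v / 2), mul_le_mul_of_nonneg_left h ha]

lemma spdstm_step (ψ : EuclideanSpace ℝ (Fin d) → ℝ) (Lψ : ℝ) (hLψ : 0 < Lψ)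
    (hψconvex : ConvexOn ℝ Set.univ ψ)
    (hψdiff : Differentiable ℝ ψ)
    (hψsmooth : ∀ x y, ‖gradient ψ x - gradient ψ y‖ ≤ Lψ * ‖x - y‖)
    (Lt : ℝ) (hLt : Lt = 2 * Lψ)
    (δ : ℝ) (hδ : 0 ≤ δ)
    (α A : ℕ → ℝ)
    (hαpos : ∀ k, 0 < α (k + 1))
    (hαeq : ∀ k, 2 * Lt * (α (k + 1)) ^ 2 = A k + α (k + 1))
    (hArec : ∀ k, A (k + 1) = A k + α (k + 1))
    (y z yt G M : ℕ → EuclideanSpace ℝ (Fin d))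
    (hbias : ∀ k, ‖M (k + 1) - gradient ψ (yt (k + 1))‖ ≤ δ)
    (hyt : ∀ k, yt (k + 1) = (A (k + 1))⁻¹ • (A k • y k + α (k + 1) • z k))
    (hz : ∀ k, z (k + 1) = z k - α (k + 1) • G (k + 1))
    (hy : ∀ k, y (k + 1) = (A (k + 1))⁻¹ • (A k • y k + α (k + 1) • z (k + 1)))
    (k : ℕ) (hAknn : 0 ≤ A k) (w : EuclideanSpace ℝ (Fin d)) :
    A (k+1) * ψ (y (k+1)) ≤ A k * ψ (y k)
      + (1/2) * ‖w - z k‖ ^ 2 - (1/2) * ‖w - z (k+1)‖ ^ 2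
      + α (k+1) * (ψ (yt (k+1)) + ⟪G (k+1), w - yt (k+1)⟫)
      + A k * ⟪G (k+1) - M (k+1), y k - yt (k+1)⟫
      + (A (k+1) / (2 * Lt)) * ‖M (k+1) - G (k+1)‖ ^ 2
      + δ * (A k * ‖y k - yt (k+1)‖)
      + δ ^ 2 * (A (k+1) / Lt) := by
  have hLtpos : 0 < Lt := by rw [hLt]; linarith
  have hA1eq : A (k+1) = 2 * Lt * (α (k+1)) ^ 2 := by rw [hArec k, ← hαeq k]
  have hapos := hαpos k
  have hA1pos : 0 < A (k+1) := by
    rw [hA1eq]; exact mul_pos (by linarith) (pow_pos hapos 2)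
  have hA1ne : A (k+1) ≠ 0 := ne_of_gt hA1pos
  -- vector identities
  have hF3 : A (k+1) • yt (k+1) = A k • y k + α (k+1) • z k := by
    rw [hyt k, smul_inv_smul₀ hA1ne]
  have hF4 : A (k+1) • y (k+1) = A k • y k + α (k+1) • z (k+1) := by
    rw [hy k, smul_inv_smul₀ hA1ne]
  have hdiffv : A (k+1) • (y (k+1) - yt (k+1)) = α (k+1) • (z (k+1) - z k) := by
    rw [smul_sub, smul_sub, hF3, hF4]; abel
  have hscale : ∀ X : EuclideanSpace ℝ (Fin d),
      A (k+1) * ⟪X, y (k+1) - yt (k+1)⟫ = α (k+1) * ⟪X, z (k+1) - z k⟫ := by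
    intro X
    rw [← real_inner_smul_right, ← real_inner_smul_right, hdiffv]
  have hnorm : A (k+1) * ‖y (k+1) - yt (k+1)‖ = α (k+1) * ‖z (k+1) - z k‖ := by
    have := congrArg norm hdiffv
    rw [norm_smul, norm_smul, Real.norm_eq_abs, Real.norm_eq_abs,
      abs_of_pos hA1pos, abs_of_pos hapos] at this
    exact this
  -- abbreviations for readability in comments only
  -- descent lemma
  have hdesc : ψ (y (k+1)) ≤ ψ (yt (k+1)) + ⟪gradient ψ (yt (k+1)), y (k+1) - yt (k+1)⟫
      + Lψ / 2 * ‖y (k+1) - yt (k+1)‖ ^ 2 := by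
    have h := descent_lemma ψ Lψ hLψ hψdiff hψsmooth (yt (k+1)) (y (k+1) - yt (k+1))
    have hyy : yt (k+1) + (y (k+1) - yt (k+1)) = y (k+1) := by abel
    rwa [hyy] at h
  have hmul : A (k+1) * ψ (y (k+1)) ≤ A (k+1) * ψ (yt (k+1))
      + A (k+1) * ⟪gradient ψ (yt (k+1)), y (k+1) - yt (k+1)⟫
      + A (k+1) * (Lψ / 2 * ‖y (k+1) - yt (k+1)‖ ^ 2) := by
    have h := mul_le_mul_of_nonneg_left hdesc hA1pos.le
    calc A (k+1) * ψ (y (k+1)) ≤ _ := h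
      _ = _ := by ring
  -- quadratic term
  have hA1eq' : A (k+1) = 4 * Lψ * (α (k+1)) ^ 2 := by rw [hA1eq, hLt]; ring
  have hsq : (A (k+1) * ‖y (k+1) - yt (k+1)‖) ^ 2 = (α (k+1) * ‖z (k+1) - z k‖) ^ 2 := by
    rw [hnorm]
  have hquad : A (k+1) * (Lψ / 2 * ‖y (k+1) - yt (k+1)‖ ^ 2) = 1/8 * ‖z (k+1) - z k‖ ^ 2 := by
    have key : A (k+1) * (A (k+1) * (Lψ / 2 * ‖y (k+1) - yt (k+1)‖ ^ 2))
        = A (k+1) * (1/8 * ‖z (k+1) - z k‖ ^ 2) := by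
      linear_combination (Lψ/2) * hsq - (1/8 * ‖z (k+1) - z k‖ ^ 2) * hA1eq'
    exact mul_left_cancel₀ hA1ne key
  -- coefficient identities
  have hc2 : A (k+1) / (2 * Lt) = (α (k+1)) ^ 2 := by
    rw [hA1eq]; field_simp
  have hc3 : A (k+1) / Lt = 2 * (α (k+1)) ^ 2 := by
    rw [hA1eq]; field_simp
  -- the z-step identity
  have hzdiff : z (k+1) - z k = -(α (k+1) • G (k+1)) := by rw [hz k]; abel
  have hw1 : w - z (k+1) = (w - z k) + α (k+1) • G (k+1) := by rw [hz k]; abel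
  have hzid : α (k+1) * ⟪G (k+1), z (k+1) - z k⟫
      = 1/2 * ‖w - z k‖ ^ 2 - 1/2 * ‖w - z (k+1)‖ ^ 2 - 1/2 * ‖z (k+1) - z k‖ ^ 2
        + α (k+1) * ⟪G (k+1), w - z k⟫ := by
    rw [hzdiff, hw1]
    rw [norm_add_sq_real, norm_neg, norm_smul, inner_neg_right, real_inner_smul_right,
      real_inner_smul_right, real_inner_self_eq_norm_sq, Real.norm_eq_abs,
      abs_of_pos hapos, real_inner_comm (w - z k) (G (k+1))]
    ring
  -- move from z k to yt and y k
  have hzk : α (k+1) • z k = A (k+1) • yt (k+1) - A k • y k := by rw [hF3]; abel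
  have hvec : α (k+1) • (w - z k)
      = α (k+1) • (w - yt (k+1)) + A k • (y k - yt (k+1)) := by
    rw [smul_sub, smul_sub, hzk, smul_sub, hArec k, add_smul]; abel
  have hzy : α (k+1) * ⟪G (k+1), w - z k⟫
      = α (k+1) * ⟪G (k+1), w - yt (k+1)⟫ + A k * ⟪G (k+1), y k - yt (k+1)⟫ := by
    have h1 : ⟪G (k+1), α (k+1) • (w - z k)⟫
        = ⟪G (k+1), α (k+1) • (w - yt (k+1))⟫ + ⟪G (k+1), A k • (y k - yt (k+1))⟫ := by
      rw [hvec, inner_add_right]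
    rw [real_inner_smul_right, real_inner_smul_right, real_inner_smul_right] at h1
    exact h1
  -- splittings
  have hsplit1 : A (k+1) * ⟪gradient ψ (yt (k+1)), y (k+1) - yt (k+1)⟫
      = A (k+1) * ⟪G (k+1), y (k+1) - yt (k+1)⟫
        + A (k+1) * ⟪M (k+1) - G (k+1), y (k+1) - yt (k+1)⟫
        + A (k+1) * ⟪gradient ψ (yt (k+1)) - M (k+1), y (k+1) - yt (k+1)⟫ := by
    simp only [inner_sub_left]; ring
  have hsplit2 : A k * ⟪G (k+1), y k - yt (k+1)⟫
      = A k * ⟪G (k+1) - M (k+1), y k - yt (k+1)⟫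
        + A k * ⟪M (k+1) - gradient ψ (yt (k+1)), y k - yt (k+1)⟫
        + A k * ⟪gradient ψ (yt (k+1)), y k - yt (k+1)⟫ := by
    simp only [inner_sub_left]; ring
  -- bounds
  have hbias' : A k * ⟪M (k+1) - gradient ψ (yt (k+1)), y k - yt (k+1)⟫
      ≤ δ * (A k * ‖y k - yt (k+1)‖) := by
    have h1 : ⟪M (k+1) - gradient ψ (yt (k+1)), y k - yt (k+1)⟫
        ≤ δ * ‖y k - yt (k+1)‖ :=
      (real_inner_le_norm _ _).trans (mul_le_mul_of_nonneg_right (hbias k) (norm_nonneg _))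
    calc A k * ⟪M (k+1) - gradient ψ (yt (k+1)), y k - yt (k+1)⟫
        ≤ A k * (δ * ‖y k - yt (k+1)‖) := mul_le_mul_of_nonneg_left h1 hAknn
      _ = δ * (A k * ‖y k - yt (k+1)‖) := by ring
  have hconv' : A k * ⟪gradient ψ (yt (k+1)), y k - yt (k+1)⟫
      ≤ A k * ψ (y k) - A k * ψ (yt (k+1)) := by
    have h1 : ψ (yt (k+1)) + ⟪gradient ψ (yt (k+1)), y k - yt (k+1)⟫ ≤ ψ (y k) :=
      convex_grad_ineq ψ hψconvex hψdiff (yt (k+1)) (y k)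
    have h2 : ⟪gradient ψ (yt (k+1)), y k - yt (k+1)⟫ ≤ ψ (y k) - ψ (yt (k+1)) := by linarith
    calc A k * ⟪gradient ψ (yt (k+1)), y k - yt (k+1)⟫
        ≤ A k * (ψ (y k) - ψ (yt (k+1))) := mul_le_mul_of_nonneg_left h2 hAknn
      _ = A k * ψ (y k) - A k * ψ (yt (k+1)) := by ring
  have hY1 : A (k+1) * ⟪M (k+1) - G (k+1), y (k+1) - yt (k+1)⟫
      ≤ (A (k+1) / (2 * Lt)) * ‖M (k+1) - G (k+1)‖ ^ 2 + 1/4 * ‖z (k+1) - z k‖ ^ 2 := by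
    rw [hscale, hc2]
    have h1 : ⟪M (k+1) - G (k+1), z (k+1) - z k⟫ ≤ ‖M (k+1) - G (k+1)‖ * ‖z (k+1) - z k‖ :=
      real_inner_le_norm _ _
    exact aux_young1 hapos.le h1
  have hY2 : A (k+1) * ⟪gradient ψ (yt (k+1)) - M (k+1), y (k+1) - yt (k+1)⟫
      ≤ δ ^ 2 * (A (k+1) / Lt) + 1/8 * ‖z (k+1) - z k‖ ^ 2 := by
    rw [hscale, hc3]
    have h0 : ‖gradient ψ (yt (k+1)) - M (k+1)‖ ≤ δ := by
      rw [norm_sub_rev]; exact hbias k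
    have h1 : ⟪gradient ψ (yt (k+1)) - M (k+1), z (k+1) - z k⟫ ≤ δ * ‖z (k+1) - z k‖ :=
      (real_inner_le_norm _ _).trans (mul_le_mul_of_nonneg_right h0 (norm_nonneg _))
    exact aux_young2 hapos.le h1
  -- gather
  have hGz : A (k+1) * ⟪G (k+1), y (k+1) - yt (k+1)⟫
      = α (k+1) * ⟪G (k+1), z (k+1) - z k⟫ := hscale _
  have hAψ : A (k+1) * ψ (yt (k+1)) = A k * ψ (yt (k+1)) + α (k+1) * ψ (yt (k+1)) := by
    rw [hArec k]; ring
  have hexp : α (k+1) * (ψ (yt (k+1)) + ⟪G (k+1), w - yt (k+1)⟫)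
      = α (k+1) * ψ (yt (k+1)) + α (k+1) * ⟪G (k+1), w - yt (k+1)⟫ := by ring
  linarith [hmul, hquad, hzid, hzy, hsplit1, hsplit2, hbias', hconv', hY1, hY2, hGz, hAψ, hexp]

end Helpers

/-- Lemma G.2 (key inequality for SPDSTM): for the SPDSTM iterates applied to a convex
`L_ψ`-smooth function `ψ` with biased stochastic gradients `G^{k+1}` whose conditional means
`m^{k+1}` satisfy `‖m^{k+1} − ∇ψ(ỹ^{k+1})‖ ≤ δ`, one has the pathwise bound on
`A_N ψ(y^N)` for every `z`. -/
theorem spdstm_key_inequality {d : ℕ}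
    (ψ : EuclideanSpace ℝ (Fin d) → ℝ) (Lψ : ℝ) (hLψ : 0 < Lψ)
    (hψconvex : ConvexOn ℝ Set.univ ψ)
    (hψdiff : Differentiable ℝ ψ)
    (hψsmooth : ∀ x y, ‖gradient ψ x - gradient ψ y‖ ≤ Lψ * ‖x - y‖)
    (Lt : ℝ) (hLt : Lt = 2 * Lψ)
    (δ : ℝ) (hδ : 0 ≤ δ)
    (N : ℕ) (hN : 1 ≤ N)
    (α A : ℕ → ℝ) (hα0 : α 0 = 0) (hA0 : A 0 = 0)
    (hαpos : ∀ k, 0 < α (k + 1))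
    (hαeq : ∀ k, 2 * Lt * (α (k + 1)) ^ 2 = A k + α (k + 1))
    (hArec : ∀ k, A (k + 1) = A k + α (k + 1))
    (y z yt G M : ℕ → EuclideanSpace ℝ (Fin d))
    (hyt0 : yt 0 = y 0) (hz0 : z 0 = y 0)
    (hbias : ∀ k, ‖M (k + 1) - gradient ψ (yt (k + 1))‖ ≤ δ)
    (hyt : ∀ k, yt (k + 1) = (A (k + 1))⁻¹ • (A k • y k + α (k + 1) • z k))
    (hz : ∀ k, z (k + 1) = z k - α (k + 1) • G (k + 1))
    (hy : ∀ k, y (k + 1) = (A (k + 1))⁻¹ • (A k • y k + α (k + 1) • z (k + 1))) :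
    ∀ w : EuclideanSpace ℝ (Fin d),
      A N * ψ (y N) ≤
        (1 / 2) * ‖w - z 0‖ ^ 2 - (1 / 2) * ‖w - z N‖ ^ 2
          + ∑ k ∈ range N, α (k + 1) * (ψ (yt (k + 1)) + ⟪G (k + 1), w - yt (k + 1)⟫)
          + ∑ k ∈ range N, A k * ⟪G (k + 1) - M (k + 1), y k - yt (k + 1)⟫
          + ∑ k ∈ range N, (A (k + 1) / (2 * Lt)) * ‖M (k + 1) - G (k + 1)‖ ^ 2
          + δ * ∑ k ∈ range N, A k * ‖y k - yt (k + 1)‖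
          + δ ^ 2 * ∑ k ∈ range N, A (k + 1) / Lt := by
  have hAnn : ∀ k, 0 ≤ A k := by
    intro k
    induction k with
    | zero => simp [hA0]
    | succ n ih => rw [hArec n]; linarith [hαpos n]
  intro w
  clear hN
  induction N with
  | zero => simp [hA0]
  | succ n ih =>
    have hstep := spdstm_step ψ Lψ hLψ hψconvex hψdiff hψsmooth Lt hLt δ hδ α A
      hαpos hαeq hArec y z yt G M hbias hyt hz hy n (hAnn n) w
    rw [Finset.sum_range_succ, Finset.sum_range_succ, Finset.sum_range_succ,
      Finset.sum_range_succ, Finset.sum_range_succ, mul_add, mul_add, mul_add]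
    linarith [hstep, ih]
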